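/- arXiv:1211.0925 — 2 statements merged into one kernel-verified Lean document; each statement's English description precedes it below -/
import Mathlib

section
/- For every β > 0 and every real α ≥ 0, the limit lim_{N→∞} (1/N) log P_β(A_N ≤ αN, V_N = 0) exists, and for rational α it coincides with g_β(α) (the limit of (1/N) log P_β(V_{N,αN}) along N ∈ N_α). That is, the two definitions of g_β are equivalent on the nonnegative rationals. -/
open scoped Classical
open Filter

noncomputable section

/-- The three allowed steps: east `(1,0)`, north `(0,1)`, south `(0,-1)`. -/
def stepVec : Fin 3 → ℤ × ℤ := ![(1, 0), (0, 1), (0, -1)]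

/-- Position of the partially directed walk after `k` steps,
for a configuration `s` of `L` steps. -/
def pathPos (L : ℕ) (s : Fin L → Fin 3) (k : ℕ) : ℤ × ℤ :=
  ∑ i : Fin L, if (i : ℕ) < k then stepVec (s i) else 0

/-- `s` encodes a path of `W_L` : it is self-avoiding (all visited sites are
distinct) and its last step is horizontal (step index `0`, i.e. `(1,0)`). -/
def IsPath (L : ℕ) (s : Fin L → Fin 3) : Prop :=
  (∀ j k : ℕ, j ≤ L → k ≤ L → pathPos L s j = pathPos L s k → j = k) ∧
  (∀ hL : 0 < L, s ⟨L - 1, by omega⟩ = 0)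

/-- Two lattice sites are adjacent (at euclidean distance 1). -/
def adjacent (p q : ℤ × ℤ) : Prop := |p.1 - q.1| + |p.2 - q.2| = 1

/-- Number of self-touchings: pairs `(i,j)` with `i < j - 1`, `j ≤ L`,
`‖w_i - w_j‖ = 1`. -/
def numTouch (L : ℕ) (s : Fin L → Fin 3) : ℕ :=
  ((Finset.range (L + 1) ×ˢ Finset.range (L + 1)).filter
    (fun ij => ij.1 + 1 < ij.2 ∧ adjacent (pathPos L s ij.1) (pathPos L s ij.2))).card

/-- The set `W_L` of valid `L`-step configurations. -/
def WL (L : ℕ) : Finset (Fin L → Fin 3) := Finset.univ.filter (IsPath L)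

/-- Non-uniform weight of a configuration: each step taken at the origin or
after a horizontal step has weight `1/3`, each step after a vertical step has
weight `1/2`. -/
def nuWeight (L : ℕ) (s : Fin L → Fin 3) : ℝ :=
  ∏ i : Fin L,
    if (i : ℕ) = 0 then (1 / 3 : ℝ)
    else if s ⟨(i : ℕ) - 1, by have := i.isLt; omega⟩ = 0 then 1 / 3 else 1 / 2

/-- The two models: uniform and non-uniform. -/
inductive Model | u | nu

/-- The law `P^m_L` on `W_L`. -/
def pweight : Model → (L : ℕ) → (Fin L → Fin 3) → ℝ
  | Model.u, L, _ => 1 / ((WL L).card : ℝ)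
  | Model.nu, L, s => nuWeight L s

/-- The partition function `Z^m_{L,β} = Σ_{w ∈ W_L} e^{H_{L,β}(w)} P^m_L(w)`,
with Hamiltonian `H_{L,β}(w) = β · (number of self-touchings)`. -/
def Z (m : Model) (L : ℕ) (β : ℝ) : ℝ :=
  ∑ s ∈ WL L, Real.exp (β * (numTouch L s : ℝ)) * pweight m L s

/-- The normalizing constant `c_β = (1+e^{-β/2})/(1-e^{-β/2})`. -/
def cbeta (β : ℝ) : ℝ := (1 + Real.exp (-β / 2)) / (1 - Real.exp (-β / 2))

/-- The geometric increment law `P_β(v = k) = e^{-(β/2)|k|}/c_β`. -/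
def incP (β : ℝ) (k : ℤ) : ℝ := Real.exp (-(β / 2) * |(k : ℝ)|) / cbeta β

/-- Position `V_j` of the random walk built from increments `v`. -/
def Vpos (n : ℕ) (v : Fin n → ℤ) (j : ℕ) : ℤ :=
  ∑ i : Fin n, if (i : ℕ) < j then v i else 0

/-- The area `A_n = Σ_{j=1}^n |V_j|`. -/
def areaA (n : ℕ) (v : Fin n → ℤ) : ℤ := ∑ j ∈ Finset.Icc 1 n, |Vpos n v j|

/-- Probability under `P_β` of an event `E` depending on the first `n`
increments of the random walk. -/
def wProb (β : ℝ) (n : ℕ) (E : (Fin n → ℤ) → Prop) : ℝ :=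
  ∑' v : Fin n → ℤ, if E v then ∏ i : Fin n, incP β (v i) else 0

/-- `P_β(V_{n,k})`: the walk returns to `0` at time `n` with area `A_n = k`. -/
def PV (β : ℝ) (n k : ℕ) : ℝ :=
  wProb β n fun v => Vpos n v n = 0 ∧ areaA n v = (k : ℤ)

/-- `P_β(V_{n,q})` for rational prescribed area `q`. -/
def PVq (β : ℝ) (n : ℕ) (q : ℚ) : ℝ :=
  wProb β n fun v => Vpos n v n = 0 ∧ (areaA n v : ℚ) = q

/-- `P_β(A_n ≤ α n, V_n = 0)`. -/
def Ple (β : ℝ) (n : ℕ) (α : ℝ) : ℝ :=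
  wProb β n fun v => (areaA n v : ℝ) ≤ α * n ∧ Vpos n v n = 0

/-- `P_β(A_n ≤ α n)`. -/
def PleA (β : ℝ) (n : ℕ) (α : ℝ) : ℝ :=
  wProb β n fun v => (areaA n v : ℝ) ≤ α * n

/-- `P_β(max_{1 ≤ j ≤ n} |V_j| ≤ α)`. -/
def Pmax (β : ℝ) (n : ℕ) (α : ℝ) : ℝ :=
  wProb β n fun v => ∀ j ∈ Finset.Icc 1 n, (|Vpos n v j| : ℝ) ≤ α

/-- `n ∈ N_α`, i.e. `n ≥ 2` and `α n ∈ ℕ`. -/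
def Nmem (α : ℚ) (n : ℕ) : Prop := 2 ≤ n ∧ ∃ m : ℕ, α * (n : ℚ) = (m : ℚ)

/-- `g_β(α) = sup_{N ∈ N_α} (1/N) log P_β(V_{N, αN})` for rational `α ≥ 0`. -/
def gQ (β : ℝ) (α : ℚ) : ℝ :=
  sSup {x : ℝ | ∃ n : ℕ, Nmem α n ∧ x = Real.log (PVq β n (α * n)) / n}

/-- `Γ^u(β) = c_β/e^β`, `Γ^nu(β) = 2c_β/(3e^β)`. -/
def Gam : Model → ℝ → ℝ
  | Model.u, β => cbeta β / Real.exp β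
  | Model.nu, β => 2 * cbeta β / (3 * Real.exp β)

/-- `φ^u_β = β - log(1+√2)`, `φ^nu_β = β - log 2`. -/
def phim : Model → ℝ → ℝ
  | Model.u, β => β - Real.log (1 + Real.sqrt 2)
  | Model.nu, β => β - Real.log 2

end

/- ========= auxiliary development ========= -/
noncomputable section Aux
open Finset

/-! ### basic facts about `cbeta` and `incP` -/

lemma rho_lt_one {β : ℝ} (hβ : 0 < β) : Real.exp (-β / 2) < 1 := by
  rw [Real.exp_lt_one_iff]; linarith

lemma cbeta_gt_one {β : ℝ} (hβ : 0 < β) : 1 < cbeta β := by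
  have h1 := rho_lt_one hβ
  have h2 : (0:ℝ) < Real.exp (-β / 2) := Real.exp_pos _
  rw [cbeta, lt_div_iff₀ (by linarith)]
  linarith

lemma cbeta_pos {β : ℝ} (hβ : 0 < β) : 0 < cbeta β := lt_trans one_pos (cbeta_gt_one hβ)

lemma log_cbeta_pos {β : ℝ} (hβ : 0 < β) : 0 < Real.log (cbeta β) :=
  Real.log_pos (cbeta_gt_one hβ)

lemma incP_pos {β : ℝ} (hβ : 0 < β) (k : ℤ) : 0 < incP β k :=
  div_pos (Real.exp_pos _) (cbeta_pos hβ)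

lemma prod_incP_nonneg {β : ℝ} (hβ : 0 < β) {n : ℕ} (v : Fin n → ℤ) :
    0 ≤ ∏ i : Fin n, incP β (v i) :=
  Finset.prod_nonneg fun i _ => (incP_pos hβ _).le

lemma prod_incP_pos {β : ℝ} (hβ : 0 < β) {n : ℕ} (v : Fin n → ℤ) :
    0 < ∏ i : Fin n, incP β (v i) :=
  Finset.prod_pos fun i _ => incP_pos hβ _

lemma prod_incP_eq {β : ℝ} (n : ℕ) (v : Fin n → ℤ) :
    ∏ i : Fin n, incP β (v i) =
      Real.exp (-(β / 2) * ∑ i : Fin n, |((v i : ℤ) : ℝ)|) * ((cbeta β)⁻¹) ^ n := by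
  simp only [incP, div_eq_mul_inv, Finset.prod_mul_distrib, Finset.mul_sum, Real.exp_sum]
  simp

lemma exp_abs_sum_le {β : ℝ} (hβ : 0 < β) (M : ℕ) :
    ∑ k ∈ Finset.Icc (-(M:ℤ)) M, Real.exp (-(β / 2) * |(k : ℝ)|) ≤
      cbeta β - 2 * Real.exp (-β/2) ^ (M+1) / (1 - Real.exp (-β/2)) := by
  have h1 := rho_lt_one hβ
  have hne : 1 - Real.exp (-β/2) ≠ 0 := by linarith
  induction M with
  | zero =>
      have heq : cbeta β - 2 * Real.exp (-β/2) ^ (0+1) / (1 - Real.exp (-β/2)) = 1 := by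
        rw [cbeta, zero_add, pow_one, div_sub_div_same, div_eq_one_iff_eq hne]; ring
      rw [heq]
      norm_num
  | succ M ih =>
      have hset : Finset.Icc (-((M:ℤ)+1)) ((M:ℤ)+1) =
          insert (-(M:ℤ)-1) (insert ((M:ℤ)+1) (Finset.Icc (-(M:ℤ)) (M:ℤ))) := by
        ext k; simp only [Finset.mem_Icc, Finset.mem_insert]; omega
      have hval : ∀ k : ℤ, |(k:ℝ)| = ((M:ℝ)+1) → Real.exp (-(β / 2) * |(k : ℝ)|)
          = Real.exp (-β/2) ^ (M+1) := by
        intro k hk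
        rw [hk, ← Real.exp_nat_mul]
        congr 1
        push_cast; ring
      have e1 : Real.exp (-(β / 2) * |((-(M:ℤ)-1 : ℤ):ℝ)|) = Real.exp (-β/2) ^ (M+1) := by
        apply hval; push_cast; rw [abs_of_nonpos (by linarith [Nat.cast_nonneg (α := ℝ) M])]; ring
      have e2 : Real.exp (-(β / 2) * |(((M:ℤ)+1 : ℤ):ℝ)|) = Real.exp (-β/2) ^ (M+1) := by
        apply hval; push_cast; rw [abs_of_nonneg (by positivity)]
      push_cast
      rw [hset, Finset.sum_insert (by simp only [Finset.mem_insert, Finset.mem_Icc]; omega),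
        Finset.sum_insert (by simp only [Finset.mem_Icc]; omega)]
      push_cast at e1 e2 ⊢
      rw [e1, e2]
      have halg : Real.exp (-β/2) ^ (M+1) + (Real.exp (-β/2) ^ (M+1) +
          (cbeta β - 2 * Real.exp (-β/2) ^ (M+1) / (1 - Real.exp (-β/2)))) =
          cbeta β - 2 * Real.exp (-β/2) ^ (M+1+1) / (1 - Real.exp (-β/2)) := by
        rw [pow_succ _ (M+1)]
        have hx : 2 * Real.exp (-β/2) ^ (M+1) / (1 - Real.exp (-β/2)) - 2 * (Real.exp (-β/2) ^ (M+1) * Real.exp (-β/2)) / (1 - Real.exp (-β/2)) = 2 * Real.exp (-β/2) ^ (M+1) := by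
          rw [div_sub_div_same, div_eq_iff hne]; ring
        linarith
      calc _ ≤ Real.exp (-β/2) ^ (M+1) + (Real.exp (-β/2) ^ (M+1) +
            (cbeta β - 2 * Real.exp (-β/2) ^ (M+1) / (1 - Real.exp (-β/2)))) := by
              gcongr
        _ = _ := halg

lemma sum_Icc_incP_le_one {β : ℝ} (hβ : 0 < β) (M : ℕ) :
    ∑ k ∈ Finset.Icc (-(M:ℤ)) M, incP β k ≤ 1 := by
  have h1 := rho_lt_one hβ
  have hc := cbeta_pos hβ
  have h2 : (0:ℝ) < Real.exp (-β / 2) := Real.exp_pos _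
  have hsum := exp_abs_sum_le hβ M
  have : ∑ k ∈ Finset.Icc (-(M:ℤ)) M, incP β k
      = (∑ k ∈ Finset.Icc (-(M:ℤ)) M, Real.exp (-(β / 2) * |(k : ℝ)|)) / cbeta β := by
    rw [Finset.sum_div]; rfl
  rw [this, div_le_one hc]
  have hpos : 0 < 2 * Real.exp (-β/2) ^ (M+1) / (1 - Real.exp (-β/2)) := div_pos (by positivity) (by linarith)
  linarith

/-! ### basic facts about `Vpos` and `areaA` -/

lemma Vpos_zero (n : ℕ) (v : Fin n → ℤ) : Vpos n v 0 = 0 := by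
  simp [Vpos]

lemma Vpos_succ (n : ℕ) (v : Fin n → ℤ) {j : ℕ} (hj : j < n) :
    Vpos n v (j+1) = Vpos n v j + v ⟨j, hj⟩ := by
  have key : ∑ i : Fin n, (if (i:ℕ) < j+1 then v i else 0)
      = ∑ i : Fin n, ((if (i:ℕ) < j then v i else 0) + (if (i:ℕ) = j then v i else 0)) := by
    refine Finset.sum_congr rfl fun i _ => ?_
    by_cases h1 : (i:ℕ) < j
    · rw [if_pos (by omega), if_pos h1, if_neg (by omega), add_zero]
    · by_cases h2 : (i:ℕ) = j
      · rw [if_pos (by omega), if_neg h1, if_pos h2, zero_add]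
      · rw [if_neg (by omega), if_neg h1, if_neg h2, add_zero]
  rw [Vpos, Vpos, key, Finset.sum_add_distrib]
  congr 1
  rw [Finset.sum_eq_single (⟨j, hj⟩ : Fin n)]
  · simp
  · intro b _ hb; exact if_neg (fun hc => hb (Fin.ext hc))
  · intro h; exact absurd (Finset.mem_univ _) h

lemma Vpos_total (n : ℕ) (v : Fin n → ℤ) {j : ℕ} (hj : n ≤ j) :
    Vpos n v j = ∑ i : Fin n, v i := by
  rw [Vpos]
  exact Finset.sum_congr rfl fun i _ => if_pos (lt_of_lt_of_le i.isLt hj)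

lemma areaA_nonneg (n : ℕ) (v : Fin n → ℤ) : 0 ≤ areaA n v :=
  Finset.sum_nonneg fun j _ => abs_nonneg _

lemma abs_Vpos_le_area (n : ℕ) (v : Fin n → ℤ) {j : ℕ} (hj1 : 1 ≤ j) (hj2 : j ≤ n) :
    |Vpos n v j| ≤ areaA n v :=
  Finset.single_le_sum (f := fun j => |Vpos n v j|) (fun i _ => abs_nonneg _)
    (Finset.mem_Icc.2 ⟨hj1, hj2⟩)

lemma supp_bound {n : ℕ} {v : Fin n → ℤ} {C : ℕ}
    (hV : Vpos n v n = 0) (hA : areaA n v ≤ (C:ℤ)) (i : Fin n) :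
    v i ∈ Finset.Icc (-((2*C : ℕ):ℤ)) ((2*C : ℕ):ℤ) := by
  have hbd : ∀ j, j ≤ n → |Vpos n v j| ≤ (C:ℤ) := by
    intro j hjn
    rcases Nat.eq_zero_or_pos j with h0 | h0
    · subst h0; rw [Vpos_zero]
      simpa using le_trans (areaA_nonneg n v) hA
    · exact le_trans (abs_Vpos_le_area n v h0 hjn) hA
  have h1 := hbd i (le_of_lt i.isLt)
  have h2 := hbd (i+1) i.isLt
  have h3 := Vpos_succ n v i.isLt
  rw [Finset.mem_Icc]
  have : v i = Vpos n v ((i:ℕ)+1) - Vpos n v (i:ℕ) := by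
    rw [h3]; simp
  rw [this]
  push_cast
  have ha := abs_le.1 h1
  have hb := abs_le.1 h2
  constructor <;> linarith [ha.1, ha.2, hb.1, hb.2]

/-! ### `wProb` machinery -/

/-- the box of configurations with all increments bounded by `M` -/
def box (n M : ℕ) : Finset (Fin n → ℤ) :=
  Fintype.piFinset (fun _ => Finset.Icc (-(M:ℤ)) M)

lemma wProb_eq_sum {β : ℝ} {n M : ℕ} {E : (Fin n → ℤ) → Prop}
    (h : ∀ v, E v → ∀ i, v i ∈ Finset.Icc (-(M:ℤ)) M) :
    wProb β n E = ∑ v ∈ box n M, if E v then ∏ i : Fin n, incP β (v i) else 0 := by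
  refine tsum_eq_sum fun v hv => ?_
  rw [if_neg]
  intro hE
  exact hv (Fintype.mem_piFinset.2 (h v hE))

lemma wProb_summand_nonneg {β : ℝ} (hβ : 0 < β) {n : ℕ} (E : (Fin n → ℤ) → Prop)
    (v : Fin n → ℤ) : 0 ≤ (if E v then ∏ i : Fin n, incP β (v i) else 0) := by
  split
  · exact prod_incP_nonneg hβ v
  · exact le_refl 0

lemma wProb_nonneg {β : ℝ} (hβ : 0 < β) {n : ℕ} (E : (Fin n → ℤ) → Prop) :
    0 ≤ wProb β n E :=
  tsum_nonneg (wProb_summand_nonneg hβ E)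

lemma wProb_le_one {β : ℝ} (hβ : 0 < β) {n M : ℕ} {E : (Fin n → ℤ) → Prop}
    (h : ∀ v, E v → ∀ i, v i ∈ Finset.Icc (-(M:ℤ)) M) :
    wProb β n E ≤ 1 := by
  rw [wProb_eq_sum h]
  calc ∑ v ∈ box n M, (if E v then ∏ i : Fin n, incP β (v i) else 0)
      ≤ ∑ v ∈ box n M, ∏ i : Fin n, incP β (v i) := by
        refine Finset.sum_le_sum fun v _ => ?_
        split
        · exact le_refl _
        · exact prod_incP_nonneg hβ v
    _ = ∏ _i : Fin n, ∑ k ∈ Finset.Icc (-(M:ℤ)) M, incP β k :=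
        (Finset.prod_univ_sum _ _).symm
    _ ≤ 1 := by
        refine Finset.prod_le_one (fun i _ => Finset.sum_nonneg fun k _ => (incP_pos hβ k).le)
          (fun i _ => sum_Icc_incP_le_one hβ M)

lemma single_le_wProb {β : ℝ} (hβ : 0 < β) {n M : ℕ} {E : (Fin n → ℤ) → Prop}
    (h : ∀ v, E v → ∀ i, v i ∈ Finset.Icc (-(M:ℤ)) M) {w : Fin n → ℤ} (hw : E w) :
    ∏ i : Fin n, incP β (w i) ≤ wProb β n E := by
  rw [wProb_eq_sum h]
  have hmem : w ∈ box n M := Fintype.mem_piFinset.2 (h w hw)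
  have := Finset.single_le_sum (f := fun v => if E v then ∏ i : Fin n, incP β (v i) else 0)
    (fun v _ => wProb_summand_nonneg hβ E v) hmem
  simpa only [if_pos hw] using this

lemma wProb_mono {β : ℝ} (hβ : 0 < β) {n M : ℕ} {E₁ E₂ : (Fin n → ℤ) → Prop}
    (h12 : ∀ v, E₁ v → E₂ v)
    (h : ∀ v, E₂ v → ∀ i, v i ∈ Finset.Icc (-(M:ℤ)) M) :
    wProb β n E₁ ≤ wProb β n E₂ := by
  rw [wProb_eq_sum (fun v hv => h v (h12 v hv)), wProb_eq_sum h]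
  refine Finset.sum_le_sum fun v _ => ?_
  by_cases h1 : E₁ v
  · rw [if_pos h1, if_pos (h12 v h1)]
  · rw [if_neg h1]
    exact wProb_summand_nonneg hβ E₂ v

lemma wProb_congr {β : ℝ} {n : ℕ} {E₁ E₂ : (Fin n → ℤ) → Prop}
    (h12 : ∀ v, E₁ v ↔ E₂ v) : wProb β n E₁ = wProb β n E₂ := by
  unfold wProb
  congr 1
  funext v
  exact if_congr (h12 v) rfl rfl

lemma wProb_singleton {β : ℝ} {n : ℕ} (w : Fin n → ℤ) :
    wProb β n (fun v => v = w) = ∏ i : Fin n, incP β (w i) := by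
  have h := tsum_eq_single (L := SummationFilter.unconditional _) (f := fun v : Fin n → ℤ =>
      @ite ℝ (v = w) (Classical.propDecidable _) (∏ i : Fin n, incP β (v i)) 0) w
      (fun v hv => if_neg hv)
  simp only [if_pos rfl] at h
  unfold wProb
  beta_reduce
  exact h

lemma wProb_zero_event {β : ℝ} {E : (Fin 0 → ℤ) → Prop} (h : E (fun i => i.elim0)) :
    wProb β 0 E = 1 := by
  unfold wProb
  rw [tsum_eq_single (fun i => i.elim0) (fun v hv => absurd (funext fun i => i.elim0) hv)]
  rw [if_pos h]
  simp

/-! ### append lemmas -/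

lemma append_inj {n m : ℕ} :
    Function.Injective (fun p : (Fin n → ℤ) × (Fin m → ℤ) => Fin.append p.1 p.2) := by
  rintro ⟨a, b⟩ ⟨c, d⟩ h
  simp only [Prod.mk.injEq]
  constructor
  · funext i
    have := congrFun h (Fin.castAdd m i)
    simpa only [Fin.append_left] using this
  · funext i
    have := congrFun h (Fin.natAdd n i)
    simpa only [Fin.append_right] using this

lemma Vpos_append_left {n m : ℕ} (v₁ : Fin n → ℤ) (v₂ : Fin m → ℤ) {j : ℕ} (hj : j ≤ n) :
    Vpos (n+m) (Fin.append v₁ v₂) j = Vpos n v₁ j := by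
  rw [Vpos, Vpos, Fin.sum_univ_add]
  have h2 : ∀ i : Fin m, (if ((Fin.natAdd n i : Fin (n+m)):ℕ) < j
      then Fin.append v₁ v₂ (Fin.natAdd n i) else 0) = 0 := by
    intro i
    rw [if_neg]
    simp only [Fin.coe_natAdd]
    omega
  rw [Finset.sum_congr rfl (fun i _ => h2 i), Finset.sum_const_zero, add_zero]
  refine Finset.sum_congr rfl fun i _ => ?_
  rw [Fin.append_left]
  rfl

lemma Vpos_append_right {n m : ℕ} (v₁ : Fin n → ℤ) (v₂ : Fin m → ℤ) (t : ℕ) :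
    Vpos (n+m) (Fin.append v₁ v₂) (n+t) = Vpos n v₁ n + Vpos m v₂ t := by
  rw [Vpos, Vpos, Vpos, Fin.sum_univ_add]
  congr 1
  · refine Finset.sum_congr rfl fun i _ => ?_
    rw [if_pos (by simp only [Fin.coe_castAdd]; omega), if_pos i.isLt, Fin.append_left]
  · refine Finset.sum_congr rfl fun i _ => ?_
    rw [Fin.append_right]
    simp only [Fin.coe_natAdd]
    congr 1
    simp only [eq_iff_iff]
    omega

lemma areaA_append {n m : ℕ} (v₁ : Fin n → ℤ) (v₂ : Fin m → ℤ) (h : Vpos n v₁ n = 0) :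
    areaA (n+m) (Fin.append v₁ v₂) = areaA n v₁ + areaA m v₂ := by
  unfold areaA
  have hicc : ∀ k : ℕ, Finset.Icc 1 k = Finset.Ioc 0 k := by
    intro k; ext x; simp only [Finset.mem_Icc, Finset.mem_Ioc]; omega
  rw [hicc, hicc, hicc]
  rw [← Finset.sum_Ioc_consecutive _ (Nat.zero_le n) (Nat.le_add_right n m)]
  congr 1
  · exact Finset.sum_congr rfl fun j hj =>
      congrArg _ (Vpos_append_left v₁ v₂ (Finset.mem_Ioc.1 hj).2)
  · have hmap : Finset.map (addLeftEmbedding n) (Finset.Ioc 0 m) = Finset.Ioc n (n+m) := by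
      rw [Finset.map_add_left_Ioc]; norm_num
    rw [← hmap, Finset.sum_map]
    refine Finset.sum_congr rfl fun t _ => ?_
    simp only [addLeftEmbedding_apply]
    rw [Vpos_append_right v₁ v₂ t, h, zero_add]

lemma Vpos_append_total {n m : ℕ} (v₁ : Fin n → ℤ) (v₂ : Fin m → ℤ) :
    Vpos (n+m) (Fin.append v₁ v₂) (n+m) = Vpos n v₁ n + Vpos m v₂ m :=
  Vpos_append_right v₁ v₂ m

lemma prod_incP_append {β : ℝ} {n m : ℕ} (v₁ : Fin n → ℤ) (v₂ : Fin m → ℤ) :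
    ∏ i : Fin (n+m), incP β (Fin.append v₁ v₂ i)
      = (∏ i : Fin n, incP β (v₁ i)) * ∏ i : Fin m, incP β (v₂ i) := by
  rw [Fin.prod_univ_add]
  congr 1
  · exact Finset.prod_congr rfl fun i _ => by rw [Fin.append_left]
  · exact Finset.prod_congr rfl fun i _ => by rw [Fin.append_right]

/-- key superadditivity inequality -/
lemma wProb_append_le {β : ℝ} (hβ : 0 < β) {n m : ℕ}
    {E₁ : (Fin n → ℤ) → Prop} {E₂ : (Fin m → ℤ) → Prop} {E : (Fin (n+m) → ℤ) → Prop}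
    {M₁ M₂ M₃ : ℕ}
    (h₁ : ∀ v, E₁ v → ∀ i, v i ∈ Finset.Icc (-(M₁:ℤ)) M₁)
    (h₂ : ∀ v, E₂ v → ∀ i, v i ∈ Finset.Icc (-(M₂:ℤ)) M₂)
    (h₃ : ∀ v, E v → ∀ i, v i ∈ Finset.Icc (-(M₃:ℤ)) M₃)
    (himp : ∀ v₁ v₂, E₁ v₁ → E₂ v₂ → E (Fin.append v₁ v₂)) :
    wProb β n E₁ * wProb β m E₂ ≤ wProb β (n+m) E := by
  classical
  set f₁ : (Fin n → ℤ) → ℝ := fun v => if E₁ v then ∏ i : Fin n, incP β (v i) else 0 with hf₁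
  set f₂ : (Fin m → ℤ) → ℝ := fun v => if E₂ v then ∏ i : Fin m, incP β (v i) else 0 with hf₂
  set g : (Fin (n+m) → ℤ) → ℝ := fun v => if E v then ∏ i : Fin (n+m), incP β (v i) else 0
    with hg
  have hgsum : Summable g := by
    refine summable_of_ne_finset_zero (s := box (n+m) M₃) fun v hv => ?_
    rw [hg]
    simp only
    rw [if_neg]
    intro hE
    exact hv (Fintype.mem_piFinset.2 (h₃ v hE))
  have key : ∀ p : (Fin n → ℤ) × (Fin m → ℤ),
      f₁ p.1 * f₂ p.2 ≤ g (Fin.append p.1 p.2) := by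
    rintro ⟨v₁, v₂⟩
    simp only [hf₁, hf₂, hg]
    by_cases hE1 : E₁ v₁
    · by_cases hE2 : E₂ v₂
      · rw [if_pos hE1, if_pos hE2, if_pos (himp v₁ v₂ hE1 hE2), prod_incP_append]
      · rw [if_neg hE2, mul_zero]
        exact wProb_summand_nonneg hβ E _
    · rw [if_neg hE1, zero_mul]
      exact wProb_summand_nonneg hβ E _
  rw [wProb_eq_sum h₁, wProb_eq_sum h₂]
  rw [Finset.sum_mul_sum]
  rw [← Finset.sum_product']
  calc ∑ p ∈ (box n M₁) ×ˢ (box m M₂), f₁ p.1 * f₂ p.2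
      ≤ ∑ p ∈ (box n M₁) ×ˢ (box m M₂), g (Fin.append p.1 p.2) :=
        Finset.sum_le_sum fun p _ => key p
    _ = ∑ w ∈ ((box n M₁) ×ˢ (box m M₂)).image
          (fun p : (Fin n → ℤ) × (Fin m → ℤ) => Fin.append p.1 p.2), g w := by
        rw [Finset.sum_image (fun x _ y _ h => append_inj h)]
    _ ≤ ∑' w : Fin (n+m) → ℤ, g w := by
        refine Summable.sum_le_tsum _ (fun w _ => wProb_summand_nonneg hβ E w) hgsum
    _ = wProb β (n+m) E := rfl

/-! ### spike configurations -/

/-- A configuration which jumps to height `h`, stays there (positions `1..ℓ`), and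
comes back to `0`. -/
def spike (h ℓ P : ℕ) : Fin P → ℤ := fun i =>
  if (i:ℕ) = 0 then (h:ℤ) else if (i:ℕ) = ℓ then -(h:ℤ) else 0

lemma sum_single_coord {M : Type*} [AddCommMonoid M] {P : ℕ} (a : ℕ) (ha : a < P)
    (g : ℕ → M) : ∑ i : Fin P, (if (i:ℕ) = a then g (i:ℕ) else 0) = g a := by
  rw [Finset.sum_eq_single (⟨a, ha⟩ : Fin P)]
  · simp
  · intro b _ hb; exact if_neg (fun hc => hb (Fin.ext hc))
  · intro hmem; exact absurd (Finset.mem_univ _) hmem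

lemma spike_Vpos {h ℓ P : ℕ} (hℓ : 1 ≤ ℓ) (hP : ℓ < P) (j : ℕ) :
    Vpos P (spike h ℓ P) j
      = (if 1 ≤ j then (h:ℤ) else 0) + (if ℓ+1 ≤ j then -(h:ℤ) else 0) := by
  rw [Vpos]
  have key : ∀ i : Fin P, (if (i:ℕ) < j then spike h ℓ P i else 0)
      = (if (i:ℕ) = 0 then (if 1 ≤ j then (h:ℤ) else 0) else 0)
      + (if (i:ℕ) = ℓ then (if ℓ+1 ≤ j then -(h:ℤ) else 0) else 0) := by
    intro i
    simp only [spike]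
    split_ifs <;> omega
  rw [Finset.sum_congr rfl (fun i _ => key i), Finset.sum_add_distrib,
    sum_single_coord 0 (by omega) (fun _ => (if 1 ≤ j then (h:ℤ) else 0)),
    sum_single_coord ℓ hP (fun _ => (if ℓ+1 ≤ j then -(h:ℤ) else 0))]

lemma spike_Vpos_end {h ℓ P : ℕ} (hℓ : 1 ≤ ℓ) (hP : ℓ < P) :
    Vpos P (spike h ℓ P) P = 0 := by
  rw [spike_Vpos hℓ hP, if_pos (by omega), if_pos (by omega)]
  ring

lemma spike_area {h ℓ P : ℕ} (hℓ : 1 ≤ ℓ) (hP : ℓ < P) :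
    areaA P (spike h ℓ P) = (h:ℤ) * ℓ := by
  unfold areaA
  have key : ∀ j ∈ Finset.Icc 1 P, |Vpos P (spike h ℓ P) j|
      = (if j ≤ ℓ then (h:ℤ) else 0) := by
    intro j hj
    rw [Finset.mem_Icc] at hj
    rw [spike_Vpos hℓ hP, if_pos hj.1]
    by_cases hjℓ : j ≤ ℓ
    · rw [if_neg (by omega), if_pos hjℓ, add_zero, abs_of_nonneg (Int.ofNat_nonneg h)]
    · rw [if_pos (by omega), if_neg hjℓ]
      simp
  rw [Finset.sum_congr rfl key, ← Finset.sum_filter]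
  have : (Finset.Icc 1 P).filter (fun j => j ≤ ℓ) = Finset.Icc 1 ℓ := by
    ext j; simp only [Finset.mem_filter, Finset.mem_Icc]; omega
  rw [this, Finset.sum_const, Nat.card_Icc]
  simp [mul_comm]

lemma spike_abs_sum {h ℓ P : ℕ} (hℓ : 1 ≤ ℓ) (hP : ℓ < P) :
    ∑ i : Fin P, |((spike h ℓ P i : ℤ) : ℝ)| = 2 * h := by
  have key : ∀ i : Fin P, |((spike h ℓ P i : ℤ) : ℝ)|
      = (if (i:ℕ) = 0 then (h:ℝ) else 0) + (if (i:ℕ) = ℓ then (h:ℝ) else 0) := by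
    intro i
    simp only [spike]
    split_ifs with h1 h2
    · omega
    · push_cast; simp [abs_of_nonneg]
    · push_cast; simp
    · push_cast; simp
  rw [Finset.sum_congr rfl (fun i _ => key i), Finset.sum_add_distrib,
    sum_single_coord 0 (by omega) (fun _ => (h:ℝ)),
    sum_single_coord ℓ hP (fun _ => (h:ℝ))]
  ring

lemma spike_prod {β : ℝ} {h ℓ P : ℕ} (hℓ : 1 ≤ ℓ) (hP : ℓ < P) :
    ∏ i : Fin P, incP β (spike h ℓ P i)
      = Real.exp (-(β/2) * (2*h)) * ((cbeta β)⁻¹) ^ P := by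
  rw [prod_incP_eq, spike_abs_sum hℓ hP]

/-! ### `PV`, `PVq`, `Ple` facts -/

lemma PV_event_supp {n k : ℕ} :
    ∀ v : Fin n → ℤ, (Vpos n v n = 0 ∧ areaA n v = (k:ℤ)) →
      ∀ i, v i ∈ Finset.Icc (-((2*k : ℕ):ℤ)) ((2*k : ℕ):ℤ) := by
  intro v hv i
  exact supp_bound hv.1 (le_of_eq hv.2) i

lemma PV_nonneg {β : ℝ} (hβ : 0 < β) (n k : ℕ) : 0 ≤ PV β n k :=
  wProb_nonneg hβ _

lemma PV_le_one {β : ℝ} (hβ : 0 < β) (n k : ℕ) : PV β n k ≤ 1 :=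
  wProb_le_one hβ PV_event_supp

lemma PV_pos {β : ℝ} (hβ : 0 < β) {n : ℕ} (hn : 2 ≤ n) (k : ℕ) : 0 < PV β n k := by
  have h1 : (1:ℕ) < n := by omega
  have hV := spike_Vpos_end (h := k) (le_refl 1) h1
  have hA := spike_area (h := k) (le_refl 1) h1
  have hw : Vpos n (spike k 1 n) n = 0 ∧ areaA n (spike k 1 n) = (k:ℤ) := by
    refine ⟨hV, ?_⟩
    rw [hA]; simp
  calc (0:ℝ) < ∏ i : Fin n, incP β (spike k 1 n i) := prod_incP_pos hβ _
    _ ≤ PV β n k := single_le_wProb hβ PV_event_supp hw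

lemma PV_append {β : ℝ} (hβ : 0 < β) (n m k l : ℕ) :
    PV β n k * PV β m l ≤ PV β (n+m) (k+l) := by
  refine wProb_append_le hβ PV_event_supp PV_event_supp PV_event_supp ?_
  intro v₁ v₂ h1 h2
  constructor
  · rw [Vpos_append_total, h1.1, h2.1, add_zero]
  · rw [areaA_append v₁ v₂ h1.1, h1.2, h2.2]
    push_cast
    ring

lemma PV_zero {β : ℝ} : PV β 0 0 = 1 := by
  refine wProb_zero_event ?_
  constructor
  · rw [Vpos_zero]
  · unfold areaA
    simp

lemma PV_pow {β : ℝ} (hβ : 0 < β) (n k m : ℕ) :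
    (PV β n k) ^ m ≤ PV β (n*m) (k*m) := by
  induction m with
  | zero => simp [PV_zero]
  | succ m ih =>
      have h1 : (PV β n k) ^ (m+1) = (PV β n k) ^ m * PV β n k := by ring
      have h2 : (PV β n k) ^ m * PV β n k ≤ PV β (n*m) (k*m) * PV β n k := by
        refine mul_le_mul_of_nonneg_right ih (PV_nonneg hβ n k)
      have h3 := PV_append hβ (n*m) n (k*m) k
      have h4 : PV β (n*m) (k*m) * PV β n k ≤ PV β (n*m+n) (k*m+k) := h3
      have hn : n*m+n = n*(m+1) := by ring
      have hk : k*m+k = k*(m+1) := by ring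
      rw [hn, hk] at h4
      calc (PV β n k) ^ (m+1) = (PV β n k) ^ m * PV β n k := h1
        _ ≤ PV β (n*m) (k*m) * PV β n k := h2
        _ ≤ PV β (n*(m+1)) (k*(m+1)) := h4

lemma Ple_event_supp {n : ℕ} {α : ℝ} (hα : 0 ≤ α) :
    ∀ v : Fin n → ℤ, ((areaA n v : ℝ) ≤ α * n ∧ Vpos n v n = 0) →
      ∀ i, v i ∈ Finset.Icc (-((2*(⌊α * (n:ℝ)⌋.toNat) : ℕ):ℤ)) ((2*(⌊α * (n:ℝ)⌋.toNat) : ℕ):ℤ) := by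
  intro v hv i
  have h0 : (0:ℝ) ≤ α * n := mul_nonneg hα (Nat.cast_nonneg n)
  have hfl : (0:ℤ) ≤ ⌊α * (n:ℝ)⌋ := Int.le_floor.2 (by simpa using h0)
  have harea : areaA n v ≤ (⌊α * (n:ℝ)⌋.toNat : ℤ) := by
    rw [Int.toNat_of_nonneg hfl]
    exact Int.le_floor.2 hv.1
  exact supp_bound hv.2 harea i

lemma Ple_nonneg {β : ℝ} (hβ : 0 < β) (n : ℕ) (α : ℝ) : 0 ≤ Ple β n α :=
  wProb_nonneg hβ _

lemma Ple_le_one {β : ℝ} (hβ : 0 < β) (n : ℕ) {α : ℝ} (hα : 0 ≤ α) : Ple β n α ≤ 1 :=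
  wProb_le_one hβ (Ple_event_supp hα)

lemma Vpos_zero_config (n : ℕ) (j : ℕ) : Vpos n (fun _ => (0:ℤ)) j = 0 := by
  unfold Vpos; simp

lemma Ple_ge {β : ℝ} (hβ : 0 < β) (n : ℕ) {α : ℝ} (hα : 0 ≤ α) :
    ((cbeta β)⁻¹) ^ n ≤ Ple β n α := by
  have hzero : (areaA n (fun _ => (0:ℤ)) : ℝ) ≤ α * n ∧ Vpos n (fun _ => (0:ℤ)) n = 0 := by
    constructor
    · have : areaA n (fun _ => (0:ℤ)) = 0 := by
        unfold areaA
        refine Finset.sum_eq_zero fun j _ => ?_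
        rw [Vpos_zero_config]; simp
      rw [this]
      push_cast
      exact mul_nonneg hα (Nat.cast_nonneg n)
    · exact Vpos_zero_config n n
  have h := single_le_wProb hβ (Ple_event_supp hα) hzero
  calc ((cbeta β)⁻¹) ^ n = ∏ i : Fin n, incP β ((fun _ => (0:ℤ)) i) := by
        rw [prod_incP_eq]; simp
    _ ≤ Ple β n α := h

lemma Ple_pos {β : ℝ} (hβ : 0 < β) (n : ℕ) {α : ℝ} (hα : 0 ≤ α) : 0 < Ple β n α :=
  lt_of_lt_of_le (pow_pos (inv_pos.2 (cbeta_pos hβ)) n) (Ple_ge hβ n hα)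

lemma Ple_superadd {β : ℝ} (hβ : 0 < β) (n m : ℕ) {α : ℝ} (hα : 0 ≤ α) :
    Ple β n α * Ple β m α ≤ Ple β (n+m) α := by
  refine wProb_append_le hβ (Ple_event_supp hα) (Ple_event_supp hα) (Ple_event_supp hα) ?_
  intro v₁ v₂ h1 h2
  constructor
  · rw [areaA_append v₁ v₂ h1.2]
    push_cast
    calc ((areaA n v₁ : ℝ) + (areaA m v₂ : ℝ)) ≤ α * n + α * m := add_le_add h1.1 h2.1
      _ = α * ((n:ℝ) + m) := by ring
  · rw [Vpos_append_total, h1.2, h2.2, add_zero]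

/-- decomposition of `Ple` into the `PV`s -/
lemma Ple_decomp {β : ℝ} (hβ : 0 < β) (n : ℕ) {α : ℝ} (hα : 0 ≤ α) :
    Ple β n α = ∑ k ∈ Finset.range (⌊α * (n:ℝ)⌋.toNat + 1), PV β n k := by
  classical
  set K := ⌊α * (n:ℝ)⌋.toNat with hK
  have h0 : (0:ℝ) ≤ α * n := mul_nonneg hα (Nat.cast_nonneg n)
  have hfl : (0:ℤ) ≤ ⌊α * (n:ℝ)⌋ := Int.le_floor.2 (by simpa using h0)
  have hKle : ((K:ℤ):ℝ) ≤ α * n := by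
    rw [hK, Int.toNat_of_nonneg hfl]
    exact le_trans (Int.floor_le _) (le_refl _)
  have hsupp : ∀ k, k ≤ K → (∀ v : Fin n → ℤ, (Vpos n v n = 0 ∧ areaA n v = (k:ℤ)) →
      ∀ i, v i ∈ Finset.Icc (-((2*K : ℕ):ℤ)) ((2*K : ℕ):ℤ)) := by
    intro k hk v hv i
    refine supp_bound hv.1 ?_ i
    rw [hv.2]
    exact_mod_cast Int.ofNat_le.2 hk
  rw [Ple, wProb_eq_sum (Ple_event_supp hα)]
  simp only [PV]
  rw [Finset.sum_congr rfl (fun k hk => wProb_eq_sum (M := 2*K)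
    (hsupp k (Nat.lt_succ_iff.1 (Finset.mem_range.1 hk)))), Finset.sum_comm]
  refine Finset.sum_congr rfl fun v _ => ?_
  by_cases hE : (areaA n v : ℝ) ≤ α * n ∧ Vpos n v n = 0
  · rw [if_pos hE]
    have hA0 : (0:ℤ) ≤ areaA n v := areaA_nonneg n v
    set a := (areaA n v).toNat with ha
    have haa : areaA n v = (a:ℤ) := (Int.toNat_of_nonneg hA0).symm
    have haK : a ≤ K := by
      have h1 : areaA n v ≤ ⌊α * (n:ℝ)⌋ := Int.le_floor.2 hE.1
      omega
    rw [Finset.sum_eq_single a]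
    · rw [if_pos ⟨hE.2, haa⟩]
    · intro b _ hb
      refine if_neg ?_
      rintro ⟨-, hab⟩
      exact hb (by omega)
    · intro hmem
      exact absurd (Finset.mem_range.2 (by omega)) hmem
  · rw [if_neg hE]
    refine (Finset.sum_eq_zero fun k hk => ?_).symm
    refine if_neg ?_
    rintro ⟨hV, hA⟩
    refine hE ⟨?_, hV⟩
    rw [hA]
    rw [Finset.mem_range] at hk
    calc ((k:ℤ):ℝ) ≤ ((K:ℤ):ℝ) := by exact_mod_cast Int.ofNat_le.2 (by omega)
      _ ≤ α * n := hKle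

lemma PVq_eq_PV {β : ℝ} {n m : ℕ} {q : ℚ} (hq : q = (m:ℚ)) :
    PVq β n q = PV β n m := by
  unfold PVq PV
  refine wProb_congr fun v => ?_
  rw [hq]
  constructor
  · rintro ⟨h1, h2⟩
    refine ⟨h1, ?_⟩
    exact_mod_cast h2
  · rintro ⟨h1, h2⟩
    refine ⟨h1, ?_⟩
    exact_mod_cast h2

/-! ### Fekete setup for `Ple` -/

lemma ple_subadd {β : ℝ} (hβ : 0 < β) {α : ℝ} (hα : 0 ≤ α) :
    Subadditive (fun n => -Real.log (Ple β n α)) := by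
  intro m n
  have hm := Ple_pos hβ m hα
  have hn := Ple_pos hβ n hα
  have h1 : Ple β m α * Ple β n α ≤ Ple β (m+n) α := Ple_superadd hβ m n hα
  have h2 : Real.log (Ple β m α * Ple β n α) ≤ Real.log (Ple β (m+n) α) :=
    Real.log_le_log (by positivity) h1
  rw [Real.log_mul hm.ne' hn.ne'] at h2
  simp only
  linarith

lemma ple_bdd {β : ℝ} (hβ : 0 < β) {α : ℝ} (hα : 0 ≤ α) :
    BddBelow (Set.range fun n : ℕ => (-Real.log (Ple β n α)) / n) := by
  refine ⟨0, ?_⟩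
  rintro x ⟨n, rfl⟩
  have h1 : Real.log (Ple β n α) ≤ 0 :=
    Real.log_nonpos (Ple_nonneg hβ n α) (Ple_le_one hβ n hα)
  have : (0:ℝ) ≤ (n:ℝ) := Nat.cast_nonneg n
  exact div_nonneg (by linarith) this

lemma ple_tendsto {β : ℝ} (hβ : 0 < β) {α : ℝ} (hα : 0 ≤ α) :
    Tendsto (fun n : ℕ => Real.log (Ple β n α) / n) atTop
      (nhds (-(ple_subadd hβ hα).lim)) := by
  have h := (ple_subadd hβ hα).tendsto_lim (ple_bdd hβ hα)
  have h2 := h.neg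
  refine h2.congr fun n => ?_
  simp [neg_div]

/-! ### `gQ` basics -/

lemma gQ_set_eq (β : ℝ) (α : ℚ) : gQ β α =
    sSup {x : ℝ | ∃ n : ℕ, Nmem α n ∧ x = Real.log (PVq β n (α * n)) / n} := rfl

lemma gQ_bddAbove {β : ℝ} (hβ : 0 < β) (α : ℚ) :
    BddAbove {x : ℝ | ∃ n : ℕ, Nmem α n ∧ x = Real.log (PVq β n (α * n)) / n} := by
  refine ⟨0, ?_⟩
  rintro x ⟨n, ⟨hn2, m, hm⟩, rfl⟩
  rw [PVq_eq_PV hm]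
  have h1 : Real.log (PV β n m) ≤ 0 :=
    Real.log_nonpos (PV_nonneg hβ n m) (PV_le_one hβ n m)
  exact div_nonpos_of_nonpos_of_nonneg h1 (Nat.cast_nonneg n)

lemma Nmem_two_den {α : ℚ} (hα : 0 ≤ α) : Nmem α (2 * α.den) := by
  refine ⟨by have := α.den_pos; omega, ⟨2 * α.num.toNat, ?_⟩⟩
  have h1 : (α.num.toNat : ℤ) = α.num := Int.toNat_of_nonneg (Rat.num_nonneg.2 hα)
  have h2 : α * (α.den : ℚ) = (α.num : ℚ) := Rat.mul_den_eq_num α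
  have h1' : ((α.num.toNat : ℕ) : ℚ) = ((α.num : ℤ) : ℚ) := by exact_mod_cast h1
  push_cast [h1']
  linear_combination 2 * h2

lemma gQ_nonempty {β : ℝ} (α : ℚ) (hα : 0 ≤ α) :
    Set.Nonempty {x : ℝ | ∃ n : ℕ, Nmem α n ∧ x = Real.log (PVq β n (α * n)) / n} :=
  ⟨_, ⟨2 * α.den, Nmem_two_den hα, rfl⟩⟩

lemma elem_le_gQ {β : ℝ} (hβ : 0 < β) {α : ℚ} {n : ℕ} (hmem : Nmem α n) :
    Real.log (PVq β n (α * n)) / n ≤ gQ β α :=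
  le_csSup (gQ_bddAbove hβ α) ⟨n, hmem, rfl⟩

set_option maxHeartbeats 1600000 in
lemma gQ_mono {β : ℝ} (hβ : 0 < β) {q1 q2 : ℚ} (h0 : 0 ≤ q1) (h12 : q1 ≤ q2) :
    gQ β q1 ≤ gQ β q2 := by
  rcases eq_or_lt_of_le h12 with rfl | hlt
  · exact le_refl _
  have hq2pos : 0 < q2 := lt_of_le_of_lt h0 hlt
  refine csSup_le (gQ_nonempty q1 h0) ?_
  rintro x ⟨n, hmem, rfl⟩
  obtain ⟨hn2, k, hk⟩ := hmem
  rw [PVq_eq_PV hk]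
  have hn0 : 0 < n := by omega
  have hnR : (0:ℝ) < (n:ℝ) := by exact_mod_cast hn0
  have hp : 0 < PV β n k := PV_pos hβ hn2 k
  have hple : PV β n k ≤ 1 := PV_le_one hβ n k
  have hlogc := log_cbeta_pos hβ
  set c : ℝ := Real.log (cbeta β) with hc
  set x : ℝ := Real.log (PV β n k) / (n:ℝ) with hx
  have hx0 : x ≤ 0 :=
    div_nonpos_of_nonpos_of_nonneg (Real.log_nonpos hp.le hple) hnR.le
  refine le_of_forall_pos_le_add fun ε hε => ?_
  set a2 : ℕ := q2.num.toNat with ha2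
  set b2 : ℕ := q2.den with hb2
  have ha2pos : 0 < a2 := by
    rw [ha2]
    have := Rat.num_pos.2 hq2pos
    omega
  have hb2pos : 0 < b2 := q2.pos
  have hq2eq : ((a2:ℚ)) = q2 * (b2:ℚ) := by
    have h1 : ((a2:ℤ)) = q2.num := Int.toNat_of_nonneg (Rat.num_nonneg.2 hq2pos.le)
    have h2 : q2 * (b2:ℚ) = (q2.num:ℚ) := Rat.mul_den_eq_num q2
    rw [h2]
    exact_mod_cast h1
  -- the area deficit E
  have hkb2 : k * b2 < a2 * n := by
    have hq1 : (k:ℚ) = q1 * n := hk.symm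
    have hcast : ((k:ℚ)) * b2 < ((a2:ℚ)) * n := by
      have hnQ : (0:ℚ) < (n:ℚ) := by exact_mod_cast hn0
      have hbQ : (0:ℚ) < (b2:ℚ) := by exact_mod_cast hb2pos
      calc (k:ℚ) * b2 = q1 * n * b2 := by rw [hq1]
        _ < q2 * n * b2 := by
            exact mul_lt_mul_of_pos_right (mul_lt_mul_of_pos_right hlt hnQ) hbQ
        _ = ((a2:ℚ)) * n := by rw [hq2eq]; ring
    exact_mod_cast hcast
  obtain ⟨E, hE, hEpos⟩ : ∃ E : ℕ, k*b2 + E = a2*n ∧ 0 < E :=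
    ⟨a2*n - k*b2, by omega, by omega⟩
  have hEle : E ≤ a2 * n := by omega
  -- choose the spike height h
  obtain ⟨H, hH⟩ := exists_nat_gt (c * a2 * 2 / ε)
  set h : ℕ := a2 + 1 + H with hh
  obtain ⟨D, hD, hDpos⟩ : ∃ D : ℕ, a2 + D = h * b2 ∧ 0 < D := by
    have h1 : h * 1 ≤ h * b2 := Nat.mul_le_mul_left h hb2pos
    exact ⟨h * b2 - a2, by omega, by omega⟩
  have hDge : H + 1 ≤ D := by
    have h1 : h * 1 ≤ h * b2 := Nat.mul_le_mul_left h hb2pos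
    omega
  have hDa2 : c * a2 ≤ (ε/2) * D := by
    have hD1 : c * a2 * 2 / ε < (H:ℝ) := hH
    have hHD : (H:ℝ) ≤ (D:ℝ) := by exact_mod_cast (by omega : H ≤ D)
    rw [div_lt_iff₀ hε] at hD1
    nlinarith
  -- choose t
  have hDR : (0:ℝ) < (D:ℝ) := by exact_mod_cast hDpos
  have hb2R : (0:ℝ) < (b2:ℝ) := by exact_mod_cast hb2pos
  have hdenpos : (0:ℝ) < (ε/2) * ((n:ℝ)*D*b2) := by positivity
  obtain ⟨t0, ht0⟩ := exists_nat_gt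
    ((β*h + ((b2*a2 + D*b2 : ℕ):ℝ) * c) / ((ε/2) * ((n:ℝ)*D*b2)))
  set t : ℕ := t0 + 1 with ht
  have htpos : 0 < t := by omega
  have htR : ((t0:ℝ)) ≤ (t:ℝ) := by exact_mod_cast (by omega : t0 ≤ t)
  -- the configuration sizes
  set m : ℕ := D*b2*t with hm
  obtain ⟨r, hr⟩ : ∃ r : ℕ, 1 + r = D*b2 := by
    have : 0 < D*b2 := Nat.mul_pos hDpos hb2pos
    exact ⟨D*b2 - 1, by omega⟩
  set l : ℕ := b2*(E*t + a2) with hl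
  set P : ℕ := l + 1 + r with hP
  set N : ℕ := n*m + P with hN
  have hmpos : 0 < m := Nat.mul_pos (Nat.mul_pos hDpos hb2pos) htpos
  have hlpos : 1 ≤ l := Nat.one_le_iff_ne_zero.2 (by
    have : 0 < b2*(E*t + a2) := Nat.mul_pos hb2pos (by omega)
    omega)
  have hlP : l < P := by omega
  have hN2 : 2 ≤ N := by
    have h1 : n * 1 ≤ n * m := Nat.mul_le_mul_left n hmpos
    omega
  -- the key arithmetic identity
  have hkey : (a2:ℤ) * N = b2 * (k*m + h*l) := by
    have hDZ : (h:ℤ) * b2 = a2 + D := by exact_mod_cast hD.symm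
    have hrZ : (1:ℤ) + r = D * b2 := by exact_mod_cast hr
    have hEZ : (a2:ℤ) * n = k * b2 + E := by exact_mod_cast hE.symm
    have hNZ : (N:ℤ) = n * m + l + 1 + r := by rw [hN, hP]; push_cast; ring
    have hmZ : (m:ℤ) = D*b2*t := by rw [hm]; push_cast; ring
    have hlZ : (l:ℤ) = b2*(E*t+a2) := by rw [hl]; push_cast; ring
    rw [hNZ, hmZ, hlZ]
    linear_combination (-(((b2:ℤ))*((E:ℤ)*t+a2))) * hDZ + ((a2:ℤ)) * hrZ
      + (((D:ℤ))*b2*t) * hEZ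
  have hb2Q : ((b2:ℚ)) ≠ 0 := by exact_mod_cast hb2pos.ne'
  have hq2N : q2 * (N:ℚ) = ((k*m + h*l : ℕ):ℚ) := by
    have hkeyQ : ((a2:ℚ)) * N = b2 * ((k:ℚ)*m + h*l) := by exact_mod_cast hkey
    apply mul_right_cancel₀ hb2Q
    push_cast
    linear_combination (-((N:ℚ))) * hq2eq + hkeyQ
  have hNmem : Nmem q2 N := ⟨hN2, ⟨k*m + h*l, hq2N⟩⟩
  -- probability chain
  have hspike_supp : ∀ v : Fin P → ℤ, v = spike h l P →
      ∀ i, v i ∈ Finset.Icc (-((h:ℕ):ℤ)) ((h:ℕ):ℤ) := by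
    rintro v rfl i
    rw [Finset.mem_Icc]
    simp only [spike]
    split_ifs <;> omega
  have happend : PV β (n*m) (k*m) * (Real.exp (-(β/2)*(2*h)) * ((cbeta β)⁻¹)^P)
      ≤ PV β N (k*m + h*l) := by
    have hw : wProb β P (fun v => v = spike h l P)
        = Real.exp (-(β/2)*(2*h)) * ((cbeta β)⁻¹)^P := by
      rw [wProb_singleton, spike_prod hlpos hlP]
    calc PV β (n*m) (k*m) * (Real.exp (-(β/2)*(2*h)) * ((cbeta β)⁻¹)^P)
        = PV β (n*m) (k*m) * wProb β P (fun v => v = spike h l P) := by rw [hw]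
      _ ≤ PV β (n*m + P) (k*m + h*l) := by
          refine wProb_append_le hβ PV_event_supp hspike_supp PV_event_supp ?_
          rintro v₁ v₂ h1 rfl
          constructor
          · rw [Vpos_append_total, h1.1, spike_Vpos_end hlpos hlP, add_zero]
          · rw [areaA_append _ _ h1.1, h1.2, spike_area hlpos hlP]
            push_cast
            ring
      _ = PV β N (k*m+h*l) := by rw [hN]
  have hpow : (PV β n k)^m * (Real.exp (-(β/2)*(2*h)) * ((cbeta β)⁻¹)^P)
      ≤ PV β N (k*m+h*l) := by
    refine le_trans (mul_le_mul_of_nonneg_right (PV_pow hβ n k m) ?_) happend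
    have := cbeta_pos hβ
    positivity
  -- lower bound for the log
  have hposL : 0 < (PV β n k)^m * (Real.exp (-(β/2)*(2*h)) * ((cbeta β)⁻¹)^P) := by
    have := cbeta_pos hβ
    positivity
  have hPVN : (m:ℝ) * Real.log (PV β n k) - β*h - P * c
      ≤ Real.log (PV β N (k*m+h*l)) := by
    have hlog := Real.log_le_log hposL hpow
    rw [Real.log_mul (by positivity) (by
        have := cbeta_pos hβ
        positivity),
      Real.log_mul (Real.exp_ne_zero _) (by
        have := cbeta_pos hβ
        positivity),
      Real.log_pow, Real.log_pow, Real.log_exp, Real.log_inv] at hlog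
    rw [← hc] at hlog
    calc (m:ℝ) * Real.log (PV β n k) - β*h - P * c
        = (m:ℝ) * Real.log (PV β n k) + (-(β/2)*(2*h) + (P:ℝ) * (-c)) := by ring
      _ ≤ Real.log (PV β N (k*m+h*l)) := hlog
  -- gQ element bound
  have hel := elem_le_gQ hβ (α := q2) hNmem
  rw [PVq_eq_PV hq2N] at hel
  -- the error estimate
  have hPR : (P:ℝ) = b2*E*t + b2*a2 + D*b2 := by
    have hPnat : P = b2*(E*t + a2) + D*b2 := by rw [hP, hl]; omega
    rw [hPnat]
    push_cast
    ring
  have hNge : ((n*(D*b2*t) : ℕ):ℝ) ≤ (N:ℝ) := by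
    have : n*(D*b2*t) ≤ N := by rw [hN, hm]; omega
    exact_mod_cast this
  have hNR : (0:ℝ) < (N:ℝ) := by
    have : 0 < N := by omega
    exact_mod_cast this
  have hC : β*h + (P:ℝ) * c ≤ ε * N := by
    have htRpos : (0:ℝ) < (t:ℝ) := by exact_mod_cast htpos
    have hER : (E:ℝ) ≤ (a2:ℝ) * n := by exact_mod_cast hEle
    have hA : (b2:ℝ)*E*t * c ≤ (ε/2) * ((n:ℝ)*D*b2*t) := by
      have h1 : (b2:ℝ)*E*t * c ≤ (b2:ℝ)*((a2:ℝ)*n)*t * c := by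
        have hnn : (0:ℝ) ≤ (b2:ℝ) * t * c := by positivity
        have h1' := mul_le_mul_of_nonneg_right hER hnn
        calc (b2:ℝ)*E*t*c = (E:ℝ) * ((b2:ℝ)*t*c) := by ring
          _ ≤ ((a2:ℝ)*n) * ((b2:ℝ)*t*c) := h1'
          _ = (b2:ℝ)*((a2:ℝ)*n)*t*c := by ring
      have h2 : (b2:ℝ)*((a2:ℝ)*n)*t * c = ((n:ℝ)*b2*t) * (c * a2) := by ring
      have h3 : ((n:ℝ)*b2*t) * (c * a2) ≤ ((n:ℝ)*b2*t) * ((ε/2) * D) := by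
        refine mul_le_mul_of_nonneg_left hDa2 (by positivity)
      calc (b2:ℝ)*E*t * c ≤ ((n:ℝ)*b2*t) * (c * a2) := by rw [← h2]; exact h1
        _ ≤ ((n:ℝ)*b2*t) * ((ε/2) * D) := h3
        _ = (ε/2) * ((n:ℝ)*D*b2*t) := by ring
    have hB : β*h + ((b2*a2 + D*b2 : ℕ):ℝ) * c ≤ (ε/2) * ((n:ℝ)*D*b2*t) := by
      rw [div_lt_iff₀ hdenpos] at ht0
      have h4 : (ε/2) * ((n:ℝ)*D*b2) * t0 ≤ (ε/2) * ((n:ℝ)*D*b2) * t :=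
        mul_le_mul_of_nonneg_left htR hdenpos.le
      calc β*h + ((b2*a2 + D*b2 : ℕ):ℝ) * c ≤ (t0:ℝ) * ((ε/2) * ((n:ℝ)*D*b2)) := ht0.le
        _ = (ε/2) * ((n:ℝ)*D*b2) * t0 := by ring
        _ ≤ (ε/2) * ((n:ℝ)*D*b2) * t := h4
        _ = (ε/2) * ((n:ℝ)*D*b2*t) := by ring
    have h5 : β*h + (P:ℝ) * c = (b2:ℝ)*E*t * c + (β*h + ((b2*a2 + D*b2 : ℕ):ℝ) * c) := by
      rw [hPR]
      push_cast
      ring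
    have h6 : ε * ((n*(D*b2*t) : ℕ):ℝ) ≤ ε * N := mul_le_mul_of_nonneg_left hNge hε.le
    have h7 : ((n*(D*b2*t) : ℕ):ℝ) = (n:ℝ)*D*b2*t := by push_cast; ring
    calc β*h + (P:ℝ) * c
        = (b2:ℝ)*E*t * c + (β*h + ((b2*a2 + D*b2 : ℕ):ℝ) * c) := h5
      _ ≤ (ε/2) * ((n:ℝ)*D*b2*t) + (ε/2) * ((n:ℝ)*D*b2*t) := add_le_add hA hB
      _ = ε * ((n:ℝ)*D*b2*t) := by ring
      _ = ε * ((n*(D*b2*t) : ℕ):ℝ) := by rw [h7]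
      _ ≤ ε * N := h6
  -- final chain
  have hmn : ((n*m : ℕ):ℝ) ≤ (N:ℝ) := by
    have : n*m ≤ N := by omega
    exact_mod_cast this
  have hmlog : (m:ℝ) * Real.log (PV β n k) = ((n*m:ℕ):ℝ) * x := by
    rw [hx]
    push_cast
    field_simp
  have hnum : (N:ℝ) * (x - ε) ≤ (m:ℝ) * Real.log (PV β n k) - β*h - P * c := by
    have h8 : (N:ℝ) * x ≤ ((n*m:ℕ):ℝ) * x := mul_le_mul_of_nonpos_right hmn hx0
    rw [hmlog.symm] at h8
    have h9 : (N:ℝ) * (x - ε) = (N:ℝ)*x - ε*(N:ℝ) := by ring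
    linarith
  have hdiv : x - ε ≤ Real.log (PV β N (k*m+h*l)) / N := by
    rw [← mul_div_cancel_left₀ (x - ε) hNR.ne']
    exact div_le_div_of_nonneg_right (le_trans hnum hPVN) hNR.le
  linarith

/-! ### the key upper bound -/

lemma log_Ple_le {β : ℝ} (hβ : 0 < β) {α : ℚ} (hα : 0 ≤ α) {n : ℕ} (hn : 2 ≤ n) :
    Real.log (Ple β n (α:ℝ)) ≤
      Real.log ((⌊(α:ℝ) * (n:ℝ)⌋.toNat + 1 : ℕ)) + n * gQ β α := by
  have hαr : (0:ℝ) ≤ (α:ℝ) := by exact_mod_cast hα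
  have hnR : (0:ℝ) < (n:ℝ) := by
    have : 0 < n := by omega
    exact_mod_cast this
  set K := ⌊(α:ℝ) * (n:ℝ)⌋.toNat with hK
  have hterm : ∀ k ∈ Finset.range (K+1), PV β n k ≤ Real.exp (n * gQ β α) := by
    intro k hk
    rw [Finset.mem_range] at hk
    have hkK : k ≤ K := by omega
    have hfl0 : (0:ℤ) ≤ ⌊(α:ℝ) * (n:ℝ)⌋ := Int.le_floor.2 (by simpa using mul_nonneg hαr hnR.le)
    have hkR : (k:ℝ) ≤ (α:ℝ) * n := by
      have h1 : (k:ℤ) ≤ ⌊(α:ℝ) * (n:ℝ)⌋ := by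
        rw [hK] at hkK
        omega
      calc (k:ℝ) = ((k:ℤ):ℝ) := by norm_num
        _ ≤ (⌊(α:ℝ) * (n:ℝ)⌋ : ℝ) := by exact_mod_cast h1
        _ ≤ (α:ℝ) * n := Int.floor_le _
    set q : ℚ := (k:ℚ)/(n:ℚ) with hq
    have hn0 : (n:ℚ) ≠ 0 := by
      have : 0 < n := by omega
      exact_mod_cast this.ne'
    have hq0 : 0 ≤ q := div_nonneg (Nat.cast_nonneg k) (Nat.cast_nonneg n)
    have hqn : q * n = (k:ℚ) := div_mul_cancel₀ _ hn0
    have hqα : q ≤ α := by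
      rw [hq, div_le_iff₀ (by positivity)]
      have : (k:ℚ) ≤ α * n := by exact_mod_cast hkR
      linarith
    have hNm : Nmem q n := ⟨hn, ⟨k, hqn⟩⟩
    have hel : Real.log (PVq β n (q * n)) / n ≤ gQ β q := elem_le_gQ hβ hNm
    rw [PVq_eq_PV hqn] at hel
    have hmono := gQ_mono hβ hq0 hqα
    have hPVpos := PV_pos hβ hn k
    have hlog : Real.log (PV β n k) ≤ n * gQ β α := by
      rw [div_le_iff₀ hnR] at hel
      calc Real.log (PV β n k) ≤ gQ β q * n := hel
        _ ≤ gQ β α * n := mul_le_mul_of_nonneg_right hmono hnR.le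
        _ = n * gQ β α := by ring
    calc PV β n k = Real.exp (Real.log (PV β n k)) := (Real.exp_log hPVpos).symm
      _ ≤ Real.exp (n * gQ β α) := Real.exp_le_exp.2 hlog
  have hsum : Ple β n (α:ℝ) ≤ ((K+1 : ℕ):ℝ) * Real.exp (n * gQ β α) := by
    rw [Ple_decomp hβ n hαr, ← hK]
    calc ∑ k ∈ Finset.range (K+1), PV β n k
        ≤ ∑ _k ∈ Finset.range (K+1), Real.exp (n * gQ β α) := Finset.sum_le_sum hterm
      _ = ((K+1 : ℕ):ℝ) * Real.exp (n * gQ β α) := by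
          rw [Finset.sum_const, Finset.card_range, nsmul_eq_mul]
  have hlog2 := Real.log_le_log (Ple_pos hβ n hαr) hsum
  rw [Real.log_mul (by positivity) (Real.exp_ne_zero _), Real.log_exp] at hlog2
  exact hlog2

/-! ### convergence of the error term -/

lemma err_tendsto {α : ℝ} (hα : 0 ≤ α) :
    Tendsto (fun n : ℕ => Real.log ((⌊α * (n:ℝ)⌋.toNat + 1 : ℕ)) / n) atTop (nhds 0) := by
  have hub : ∀ᶠ n : ℕ in atTop, Real.log ((⌊α * (n:ℝ)⌋.toNat + 1 : ℕ)) / n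
      ≤ (Real.log (α+1) + Real.log n) / n := by
    refine Filter.eventually_atTop.2 ⟨1, fun n hn => ?_⟩
    have hnR : (0:ℝ) < (n:ℝ) := by exact_mod_cast hn
    have h1 : ((⌊α * (n:ℝ)⌋.toNat + 1 : ℕ):ℝ) ≤ (α+1) * n := by
      have hfl : (⌊α * (n:ℝ)⌋ : ℝ) ≤ α * n := Int.floor_le _
      have hfl0 : (0:ℤ) ≤ ⌊α * (n:ℝ)⌋ := Int.le_floor.2 (by simpa using mul_nonneg hα hnR.le)
      have h2 : ((⌊α * (n:ℝ)⌋.toNat : ℕ):ℝ) = (⌊α * (n:ℝ)⌋ : ℝ) := by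
        exact_mod_cast Int.toNat_of_nonneg hfl0
      push_cast
      rw [h2]
      have h3 : (1:ℝ) ≤ n := by exact_mod_cast hn
      nlinarith
    have h4 : Real.log ((⌊α * (n:ℝ)⌋.toNat + 1 : ℕ)) ≤ Real.log ((α+1) * n) :=
      Real.log_le_log (by positivity) h1
    rw [Real.log_mul (by positivity) hnR.ne'] at h4
    exact div_le_div_of_nonneg_right h4 hnR.le
  have hlb : ∀ᶠ n : ℕ in atTop, (0:ℝ) ≤ Real.log ((⌊α * (n:ℝ)⌋.toNat + 1 : ℕ)) / n := by
    refine Filter.eventually_atTop.2 ⟨1, fun n hn => ?_⟩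
    have hnR : (0:ℝ) ≤ (n:ℝ) := Nat.cast_nonneg n
    refine div_nonneg (Real.log_nonneg ?_) hnR
    have : (1:ℕ) ≤ ⌊α * (n:ℝ)⌋.toNat + 1 := by omega
    exact_mod_cast this
  have hup : Tendsto (fun n : ℕ => (Real.log (α+1) + Real.log n) / n) atTop (nhds 0) := by
    have h1 : Tendsto (fun n : ℕ => Real.log (α+1) / n) atTop (nhds 0) :=
      tendsto_const_div_atTop_nhds_zero_nat _
    have h2 : Tendsto (fun n : ℕ => Real.log n / n) atTop (nhds 0) := by
      have h3 := Real.isLittleO_log_id_atTop.tendsto_div_nhds_zero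
      exact h3.comp tendsto_natCast_atTop_atTop
    have := h1.add h2
    rw [add_zero] at this
    refine this.congr fun n => ?_
    rw [add_div]
  exact tendsto_of_tendsto_of_tendsto_of_le_of_le' tendsto_const_nhds hup hlb hub

end Aux


/-- For every `β > 0` and real `α ≥ 0` the limit
`lim_{N→∞} (1/N) log P_β(A_N ≤ αN, V_N = 0)` exists, and for rational `α`
it coincides with `g_β(α)` (defined along `N ∈ N_α`). -/
theorem stmt10 (β : ℝ) (hβ : 0 < β) :
    (∀ α : ℝ, 0 ≤ α → ∃ l : ℝ,
      Filter.Tendsto (fun n : ℕ => Real.log (Ple β n α) / n) Filter.atTop (nhds l)) ∧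
    (∀ α : ℚ, 0 ≤ α →
      Filter.Tendsto (fun n : ℕ => Real.log (Ple β n (α : ℝ)) / n) Filter.atTop
        (nhds (gQ β α))) := by
  constructor
  · intro α hα
    exact ⟨-(ple_subadd hβ hα).lim, ple_tendsto hβ hα⟩
  · intro α hα
    have hαr : (0:ℝ) ≤ (α:ℝ) := by exact_mod_cast hα
    have hT := ple_tendsto hβ hαr
    have heq : -(ple_subadd hβ hαr).lim = gQ β α := by
      have hge : gQ β α ≤ -(ple_subadd hβ hαr).lim := by
        refine csSup_le (gQ_nonempty α hα) ?_
        rintro x ⟨n, hmem, rfl⟩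
        obtain ⟨hn2, m, hm⟩ := hmem
        have hn0 : n ≠ 0 := by omega
        have hnR : (0:ℝ) < (n:ℝ) := by
          have : 0 < n := by omega
          exact_mod_cast this
        rw [PVq_eq_PV hm]
        have hcast : ((α:ℝ)) * (n:ℝ) = (m:ℝ) := by exact_mod_cast hm
        have hPle : PV β n m ≤ Ple β n (α:ℝ) := by
          refine wProb_mono hβ (fun v hv => ⟨?_, hv.1⟩) (Ple_event_supp hαr)
          rw [hv.2]
          push_cast
          linarith [hcast.ge]
        have hlog : Real.log (PV β n m) / n ≤ Real.log (Ple β n (α:ℝ)) / n :=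
          div_le_div_of_nonneg_right
            (Real.log_le_log (PV_pos hβ hn2 m) hPle) hnR.le
        have hlim := (ple_subadd hβ hαr).lim_le_div (ple_bdd hβ hαr) hn0
        rw [neg_div] at hlim
        linarith
      have hle : -(ple_subadd hβ hαr).lim ≤ gQ β α := by
        have hg : Tendsto (fun n : ℕ =>
            gQ β α + Real.log ((⌊(α:ℝ) * (n:ℝ)⌋.toNat + 1 : ℕ)) / n) atTop
            (nhds (gQ β α)) := by
          have h2 := Filter.Tendsto.add
            (tendsto_const_nhds : Tendsto (fun _ : ℕ => gQ β α) atTop (nhds (gQ β α)))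
            (err_tendsto hαr)
          rw [add_zero] at h2
          exact h2
        refine le_of_tendsto_of_tendsto hT hg ?_
        refine Filter.eventually_atTop.2 ⟨2, fun n hn => ?_⟩
        have hnR : (0:ℝ) < (n:ℝ) := by
          have : 0 < n := by omega
          exact_mod_cast this
        have h1 := log_Ple_le hβ hα (n := n) hn
        calc Real.log (Ple β n (α:ℝ)) / n
            ≤ (Real.log ((⌊(α:ℝ) * (n:ℝ)⌋.toNat + 1 : ℕ)) + n * gQ β α) / n :=
              div_le_div_of_nonneg_right h1 hnR.le
          _ = gQ β α + Real.log ((⌊(α:ℝ) * (n:ℝ)⌋.toNat + 1 : ℕ)) / n := by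
              field_simp
              ring
      linarith
    rw [← heq]
    exact hT
end

section
/- For every α > 0, every M ∈ ℕ and every N ∈ Ma²ℕ (where a = ⌊α⌋), the inclusion A_{N,α} ⊆ B_{N,M,α} holds: every trajectory (V_i)_{i=0}^N with V_0 = 0 and Σ_{i=0}^N |V_i| ≤ αN must, in at least N/(4Ma²) of the N/(Ma²) consecutive blocks I_{j,M} = {(j−1)Ma²+1, …, jMa²} of length Ma², spend at least Ma²/3 time steps i with |V_i| < 2α. -/
open scoped Classical
open Filter

lemma stmt19_block_sum (K : ℕ) (f : ℕ → ℝ) (n : ℕ) :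
    ∑ j ∈ Finset.Icc 1 n, ∑ i ∈ Finset.Icc ((j-1)*K+1) (j*K), f i
      = ∑ i ∈ Finset.Icc 1 (n*K), f i := by
  induction n with
  | zero => simp
  | succ n ih =>
    rw [Finset.sum_Icc_succ_top (by omega : 1 ≤ n + 1), ih]
    have h1 : ∀ m : ℕ, Finset.Icc 1 m = Finset.Ioc 0 m := by
      intro m; rw [← Finset.Icc_add_one_left_eq_Ioc, zero_add]
    have h2 : (n + 1 - 1) * K + 1 = n * K + 1 := by rw [Nat.add_sub_cancel]
    have h3 : Finset.Icc (n*K+1) ((n+1)*K) = Finset.Ioc (n*K) ((n+1)*K) :=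
      Finset.Icc_add_one_left_eq_Ioc _ _
    rw [h1, h1, h2, h3]
    exact Finset.sum_Ioc_consecutive f (Nat.zero_le _) (by nlinarith)


/-- Deterministic inclusion `A_{N,α} ⊆ B_{N,M,α}`: if a
trajectory `(V_i)_{i=0}^N` with `V_0 = 0` satisfies `Σ_{i=0}^N |V_i| ≤ αN`,
then in at least `N/(4Ma²)` of the `N/(Ma²) = n` blocks
`I_{j,M} = {(j-1)Ma²+1, …, jMa²}` it spends at least `Ma²/3` time steps `i`
with `|V_i| < 2α` (here `a = ⌊α⌋` and `N = Ma²·n`). -/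

theorem stmt19 (α : ℝ) (hα : 0 < α) (M : ℕ) (hM : 0 < M) (n N : ℕ)
    (hN : N = M * (Nat.floor α) ^ 2 * n)
    (V : ℕ → ℤ) (hV0 : V 0 = 0)
    (hA : (∑ i ∈ Finset.range (N + 1), (|V i| : ℝ)) ≤ α * N) :
    (N : ℝ) / (4 * M * (Nat.floor α) ^ 2) ≤
      (((Finset.Icc 1 n).filter (fun j =>
        ((M * (Nat.floor α) ^ 2 : ℕ) : ℝ) / 3 ≤
          (((Finset.Icc ((j - 1) * (M * (Nat.floor α) ^ 2) + 1)
              (j * (M * (Nat.floor α) ^ 2))).filter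
            (fun i => (|V i| : ℝ) < 2 * α)).card : ℝ))).card : ℝ) := by
  classical
  set a := Nat.floor α with ha
  by_cases ha0 : a = 0
  · have hN0 : N = 0 := by simp [hN, ha0]
    rw [hN0]
    simp
  have haR : (a : ℝ) ≤ α := Nat.floor_le hα.le
  have ha1 : 1 ≤ a := Nat.one_le_iff_ne_zero.mpr ha0
  set K := M * a ^ 2 with hKdef
  have hK : 0 < K := by positivity
  have hKR : (0:ℝ) < (K:ℝ) := by exact_mod_cast hK
  set P : ℕ → Prop := fun i => (|V i| : ℝ) < 2 * α with hP
  set Good : ℕ → Prop := fun j =>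
    ((K : ℕ) : ℝ) / 3 ≤
      (((Finset.Icc ((j - 1) * K + 1) (j * K)).filter P).card : ℝ) with hGood
  set G := (Finset.Icc 1 n).filter Good with hG
  set B := (Finset.Icc 1 n).filter (fun j => ¬ Good j) with hB
  have hGB : G.card + B.card = n := by
    rw [hG, hB, Finset.card_filter_add_card_filter_not, Nat.card_Icc]
    omega
  -- lower bound for bad blocks
  have hbad : ∀ j ∈ B, 2 * α * (2 * (K:ℝ) / 3) ≤
      ∑ i ∈ Finset.Icc ((j-1)*K+1) (j*K), (|V i| : ℝ) := by
    intro j hj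
    rw [hB, Finset.mem_filter] at hj
    obtain ⟨hj1, hj2⟩ := hj
    rw [Finset.mem_Icc] at hj1
    obtain ⟨m, rfl⟩ : ∃ m, j = m + 1 := ⟨j - 1, by omega⟩
    set S := Finset.Icc ((m+1-1)*K+1) ((m+1)*K) with hS
    have hcardS : S.card = K := by
      rw [hS, Nat.card_Icc, Nat.add_sub_cancel]
      have : (m+1)*K = m*K + K := by ring
      omega
    have hsplit : (S.filter P).card + (S.filter (fun i => ¬ P i)).card = K := by
      rw [Finset.card_filter_add_card_filter_not, hcardS]
    have hlt : ((S.filter P).card : ℝ) < (K:ℝ)/3 := by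
      simp only [hGood, not_le] at hj2
      rw [hS]; exact_mod_cast hj2
    have hge : 2 * (K:ℝ) / 3 ≤ ((S.filter (fun i => ¬ P i)).card : ℝ) := by
      have : ((S.filter (fun i => ¬ P i)).card : ℝ)
          = (K:ℝ) - ((S.filter P).card : ℝ) := by
        have := hsplit
        push_cast [← this]
        ring
      rw [this]; linarith
    calc 2 * α * (2 * (K:ℝ) / 3)
        ≤ 2 * α * ((S.filter (fun i => ¬ P i)).card : ℝ) := by
          apply mul_le_mul_of_nonneg_left hge (by positivity)
      _ = ∑ _i ∈ S.filter (fun i => ¬ P i), 2 * α := by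
          rw [Finset.sum_const, nsmul_eq_mul]; ring
      _ ≤ ∑ i ∈ S.filter (fun i => ¬ P i), (|V i| : ℝ) := by
          apply Finset.sum_le_sum
          intro i hi
          rw [Finset.mem_filter] at hi
          have h2 := hi.2
          simp only [hP, not_lt] at h2
          exact h2
      _ ≤ ∑ i ∈ S, (|V i| : ℝ) := by
          apply Finset.sum_le_sum_of_subset_of_nonneg (Finset.filter_subset _ _)
          intro i _ _; positivity
  -- total sum bound
  have htot : ∑ j ∈ Finset.Icc 1 n, ∑ i ∈ Finset.Icc ((j-1)*K+1) (j*K), (|V i| : ℝ)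
      ≤ α * N := by
    rw [stmt19_block_sum]
    have h1 : n * K = N := by rw [hN]; ring
    rw [h1]
    have h2 : ∑ i ∈ Finset.Icc 1 N, (|V i| : ℝ)
        ≤ ∑ i ∈ Finset.range (N+1), (|V i| : ℝ) := by
      apply Finset.sum_le_sum_of_subset_of_nonneg
      · intro i hi
        rw [Finset.mem_Icc] at hi
        rw [Finset.mem_range]
        omega
      · intro i _ _; positivity
    linarith
  have hBsum : (B.card : ℝ) * (2 * α * (2 * (K:ℝ) / 3)) ≤ α * N := by
    calc (B.card : ℝ) * (2 * α * (2 * (K:ℝ) / 3))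
        = ∑ _j ∈ B, 2 * α * (2 * (K:ℝ) / 3) := by
          rw [Finset.sum_const, nsmul_eq_mul]
      _ ≤ ∑ j ∈ B, ∑ i ∈ Finset.Icc ((j-1)*K+1) (j*K), (|V i| : ℝ) :=
          Finset.sum_le_sum hbad
      _ ≤ ∑ j ∈ Finset.Icc 1 n, ∑ i ∈ Finset.Icc ((j-1)*K+1) (j*K), (|V i| : ℝ) := by
          apply Finset.sum_le_sum_of_subset_of_nonneg (Finset.filter_subset _ _)
          intro j _ _
          apply Finset.sum_nonneg
          intro i _; positivity
      _ ≤ α * N := htot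
  have hNR : (N : ℝ) = (K:ℝ) * n := by rw [hN]; push_cast; ring
  have hBle : (B.card : ℝ) ≤ 3 * n / 4 := by
    rw [hNR] at hBsum
    have h4 : (0:ℝ) < 4 * α * (K:ℝ) / 3 := by positivity
    nlinarith [hα, hKR, mul_pos hα hKR]
  have hGcard : (n:ℝ) - (B.card:ℝ) ≤ (G.card : ℝ) := by
    have : (G.card : ℝ) + (B.card : ℝ) = n := by exact_mod_cast hGB
    linarith
  have hgoal : (N : ℝ) / (4 * M * a ^ 2) = (n:ℝ) / 4 := by
    rw [hNR]
    have : ((4:ℝ) * M * a ^ 2) = 4 * (K:ℝ) := by push_cast [hKdef]; ring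
    rw [this]
    field_simp
  rw [hgoal]
  calc (n:ℝ)/4 ≤ (n:ℝ) - (B.card:ℝ) := by linarith
    _ ≤ (G.card : ℝ) := hGcard
end
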